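/- Let P be a probability measure on Ω ⊆ ℝ^d with finite expected value E_P. Then E_P lies in the relative interior of the closed convex hull of the support of P. -/

import Mathlib

open MeasureTheory

/-- The (topological) support of a measure: points all of whose neighborhoods
have positive measure. -/
def measureSupport {d : ℕ} (P : Measure (EuclideanSpace ℝ (Fin d))) :
    Set (EuclideanSpace ℝ (Fin d)) :=
  {x | ∀ U ∈ nhds x, P U ≠ 0}

/-- The complement of the support of a measure is null. -/
lemma measure_compl_measureSupport {d : ℕ} (P : Measure (EuclideanSpace ℝ (Fin d))) :
    P (measureSupport P)ᶜ = 0 := by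
  set 𝒮 : Set (Set (EuclideanSpace ℝ (Fin d))) := {U | IsOpen U ∧ P U = 0} with h𝒮
  obtain ⟨T, hTc, hTS, hT⟩ := TopologicalSpace.isOpen_sUnion_countable 𝒮 (fun s hs => hs.1)
  have hsub : (measureSupport P)ᶜ ⊆ ⋃₀ 𝒮 := by
    intro x hx
    simp only [measureSupport, Set.mem_compl_iff, Set.mem_setOf_eq, not_forall] at hx
    obtain ⟨U, hU, hU0⟩ := hx
    simp only [not_ne_iff] at hU0
    obtain ⟨V, hVU, hVopen, hxV⟩ := mem_nhds_iff.mp hU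
    exact ⟨V, ⟨hVopen, le_antisymm (hU0 ▸ measure_mono hVU) zero_le⟩, hxV⟩
  refine measure_mono_null (hsub.trans hT.symm.subset) ?_
  exact (measure_sUnion_null_iff hTc).mpr fun s hs => (hTS hs).2

set_option maxHeartbeats 1000000 in
/-- The expected value of a probability measure `P` on (a subset of) `ℝ^d`
with finite expectation lies in the relative interior of the closed convex hull
of the support of `P`. -/
theorem expectation_mem_intrinsicInterior_convexSupport
    {d : ℕ} (P : Measure (EuclideanSpace ℝ (Fin d)))
    [IsProbabilityMeasure P]
    (hint : Integrable (fun x => x) P) :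
    (∫ x, x ∂P) ∈
      intrinsicInterior ℝ (closure (convexHull ℝ (measureSupport P))) := by
  classical
  set E := EuclideanSpace ℝ (Fin d)
  set S : Set E := measureSupport P with hSdef
  set C : Set E := closure (convexHull ℝ S) with hCdef
  set m : E := ∫ x, x ∂P with hmdef
  have hCconv : Convex ℝ C := (convex_convexHull ℝ S).closure
  have hCclosed : IsClosed C := isClosed_closure
  have hSC : S ⊆ C := (Set.Subset.trans (subset_convexHull ℝ S) subset_closure)
  have haeS : ∀ᵐ x ∂P, x ∈ S := by
    rw [MeasureTheory.ae_iff]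
    exact measure_compl_measureSupport P
  have hm : m ∈ C :=
    hCconv.integral_mem hCclosed (haeS.mono fun x hx => hSC hx) hint
  -- Key lemma: any continuous linear functional minimized at m over C is constant on C.
  have key : ∀ g : E →L[ℝ] ℝ, (∀ x ∈ C, g m ≤ g x) → ∀ x ∈ C, g x = g m := by
    intro g hg
    have hgi : Integrable (fun x => g x) P := g.integrable_comp hint
    have hI : ∫ x, g x ∂P = g m := g.integral_comp_comm hint
    have h0 : ∫ x, (g x - g m) ∂P = 0 := by
      rw [integral_sub hgi (integrable_const _), hI, integral_const, probReal_univ]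
      simp
    have hnn : 0 ≤ᵐ[P] fun x => g x - g m :=
      haeS.mono fun x hx => sub_nonneg.2 (hg x (hSC hx))
    have heq : (fun x => g x - g m) =ᵐ[P] 0 :=
      (integral_eq_zero_iff_of_nonneg_ae hnn (hgi.sub (integrable_const _))).mp h0
    have hnull : P {y | g y ≠ g m} = 0 := by
      have : ∀ᵐ y ∂P, g y = g m := by
        filter_upwards [heq] with y hy
        exact sub_eq_zero.mp hy
      rw [MeasureTheory.ae_iff] at this
      simpa using this
    have hShyp : S ⊆ {y | g y = g m} := by
      intro s hs
      by_contra hne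
      exact hs {y | g y ≠ g m}
        ((isOpen_ne_fun g.continuous continuous_const).mem_nhds hne) hnull
    have hChyp : C ⊆ {y | g y = g m} := by
      refine closure_minimal (convexHull_min hShyp ?_) (isClosed_eq g.continuous continuous_const)
      exact convex_hyperplane (IsLinearMap.mk g.map_add fun c x => g.map_smul c x) (g m)
    exact fun x hx => hChyp hx
  -- The affine span and its direction.
  set A : AffineSubspace ℝ E := affineSpan ℝ C with hAdef
  have hmA : m ∈ A := subset_affineSpan ℝ C hm
  set V : Submodule ℝ E := A.direction with hVdef
  have hsub : ∀ x ∈ C, x - m ∈ V := by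
    intro x hx
    have := AffineSubspace.vsub_mem_direction (subset_affineSpan ℝ C hx) hmA
    simpa [vsub_eq_sub] using this
  -- the translated set inside V
  set D : Set V := {v | (v : E) + m ∈ C} with hDdef
  have h0D : (0 : V) ∈ D := by simpa [hDdef] using hm
  have hDconv : Convex ℝ D := by
    intro v hv w hw a b ha hb hab
    have hm' : a • m + b • m = m := by
      rw [← add_smul, hab, one_smul]
    have hcomb : (a • (v : E) + b • (w : E)) + m = a • ((v : E) + m) + b • ((w : E) + m) := by
      conv_lhs => rw [← hm']
      rw [smul_add, smul_add]
      abel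
    show ((a • v + b • w : V) : E) + m ∈ C
    push_cast
    rw [hcomb]
    exact hCconv hv hw ha hb hab
  -- the span of D is everything
  have hVspan : V = Submodule.span ℝ ((fun x => x - m) '' C) := by
    rw [hVdef, hAdef, direction_affineSpan, vectorSpan_eq_span_vsub_set_right ℝ hm]
    rfl
  have himg : Subtype.val '' D = (fun x => x - m) '' C := by
    ext y
    constructor
    · rintro ⟨v, hv, rfl⟩
      exact ⟨(v : E) + m, hv, by simp⟩
    · rintro ⟨x, hx, rfl⟩
      exact ⟨⟨x - m, hsub x hx⟩, by simpa [hDdef] using hx, rfl⟩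
  have hspanD : Submodule.span ℝ D = (⊤ : Submodule ℝ V) := by
    apply Submodule.map_injective_of_injective V.injective_subtype
    rw [Submodule.map_span, Submodule.map_top, Submodule.range_subtype]
    show Submodule.span ℝ (Subtype.val '' D) = V
    rw [himg, ← hVspan]
  have haffD : affineSpan ℝ D = (⊤ : AffineSubspace ℝ V) := by
    have hne : (affineSpan ℝ D : Set V).Nonempty := ⟨0, subset_affineSpan ℝ D h0D⟩
    rw [← AffineSubspace.direction_eq_top_iff_of_nonempty hne, direction_affineSpan]
    rw [eq_top_iff, ← hspanD]
    refine Submodule.span_le.2 ?_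
    intro v hv
    have : v -ᵥ (0 : V) ∈ vectorSpan ℝ D := vsub_mem_vectorSpan ℝ hv h0D
    simpa using this
  have hintne : (interior D).Nonempty := by
    rw [hDconv.interior_nonempty_iff_affineSpan_eq_top]
    exact haffD
  -- main claim: 0 lies in the interior of D
  have h0int : (0 : V) ∈ interior D := by
    by_contra h0
    obtain ⟨z, hz⟩ := hintne
    obtain ⟨f, hf⟩ := geometric_hahn_banach_point_open hDconv.interior isOpen_interior h0
    simp only [map_zero] at hf
    -- f is nonneg on D
    have hfD : ∀ b ∈ D, 0 ≤ f b := by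
      intro b hb
      have hlim : Filter.Tendsto (fun t : ℝ => (1 - t) * f b + t * f z)
          (nhdsWithin 0 (Set.Ioi 0)) (nhds (f b)) := by
        have hc : Continuous fun t : ℝ => (1 - t) * f b + t * f z :=
          (((continuous_const.sub continuous_id).mul continuous_const).add
            (continuous_id.mul continuous_const))
        have := hc.tendsto 0
        simp only [sub_zero, one_mul, zero_mul, add_zero] at this
        exact this.mono_left nhdsWithin_le_nhds
      refine ge_of_tendsto hlim ?_
      filter_upwards [Ioo_mem_nhdsGT_of_mem (Set.left_mem_Ico.mpr zero_lt_one)] with t ht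
      have hmem : (1 - t) • b + t • z ∈ interior D :=
        hDconv.combo_closure_interior_mem_interior (subset_closure hb) hz
          (by linarith [ht.2]) ht.1 (by ring)
      have := hf _ hmem
      simpa [map_add, _root_.map_smul, smul_eq_mul] using this.le
    -- build the global functional
    haveI : CompleteSpace V := FiniteDimensional.complete ℝ V
    set g : E →L[ℝ] ℝ := f.comp (V.orthogonalProjectionOnto) with hgdef
    have hgval : ∀ x (hx : x ∈ C), g x - g m = f ⟨x - m, hsub x hx⟩ := by
      intro x hx
      have h1 : g x - g m = f ((V.orthogonalProjectionOnto) x - (V.orthogonalProjectionOnto) m) := by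
        rw [map_sub]
        simp [hgdef]
      have h2 : (V.orthogonalProjectionOnto) x - (V.orthogonalProjectionOnto) m
          = (V.orthogonalProjectionOnto) (x - m) := (map_sub (V.orthogonalProjectionOnto) x m).symm
      have h3 : (V.orthogonalProjectionOnto) (x - m) = ⟨x - m, hsub x hx⟩ := by
        have := Submodule.orthogonalProjectionOnto_mem_subspace_eq_self (K := V) ⟨x - m, hsub x hx⟩
        simpa using this
      rw [h1, h2, h3]
    have hge : ∀ x ∈ C, g m ≤ g x := by
      intro x hx
      have hmemD : (⟨x - m, hsub x hx⟩ : V) ∈ D := by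
        simp only [hDdef, Set.mem_setOf_eq, sub_add_cancel]
        exact hx
      have := hfD _ hmemD
      rw [← hgval x hx] at this
      linarith
    have hallconst := key g hge
    have hzD : z ∈ D := interior_subset hz
    have hzC : ((z : E) + m) ∈ C := hzD
    have h4 := hallconst _ hzC
    have h5 : g ((z : E) + m) - g m = f ⟨((z : E) + m) - m, hsub _ hzC⟩ := hgval _ hzC
    have h6 : (⟨((z : E) + m) - m, hsub _ hzC⟩ : V) = z := by
      ext
      simp
    rw [h4, sub_self, h6] at h5
    exact absurd h5.symm (ne_of_gt (hf z hz))
  -- transfer 0 ∈ interior D to m ∈ intrinsicInterior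
  have hAtoV : ∀ x : A, (x : E) - m ∈ V := fun x => by
    simpa [vsub_eq_sub] using AffineSubspace.vsub_mem_direction x.2 hmA
  have hVtoA : ∀ v : V, (v : E) + m ∈ A := fun v => by
    simpa [vadd_eq_add] using AffineSubspace.vadd_mem_of_mem_direction v.2 hmA
  let e : A ≃ₜ V :=
    { toFun := fun x => ⟨(x : E) - m, hAtoV x⟩
      invFun := fun v => ⟨(v : E) + m, hVtoA v⟩
      left_inv := fun x => Subtype.ext (sub_add_cancel (x : E) m)
      right_inv := fun v => Subtype.ext (add_sub_cancel_right (v : E) m)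
      continuous_toFun := (continuous_subtype_val.sub continuous_const).subtype_mk hAtoV
      continuous_invFun := (continuous_subtype_val.add continuous_const).subtype_mk hVtoA }
  have hpre : e ⁻¹' D = (Subtype.val ⁻¹' C : Set A) := by
    ext x
    show ((x : E) - m) + m ∈ C ↔ (x : E) ∈ C
    rw [sub_add_cancel]
  have hmem : (⟨m, hmA⟩ : A) ∈ interior (Subtype.val ⁻¹' C : Set A) := by
    rw [← hpre, ← Homeomorph.preimage_interior]
    show e ⟨m, hmA⟩ ∈ interior D
    have he0 : e ⟨m, hmA⟩ = 0 := Subtype.ext (sub_self m)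
    rw [he0]
    exact h0int
  exact mem_intrinsicInterior.mpr ⟨⟨m, hmA⟩, hmem, rfl⟩
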